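/- The symmetry group of the chain poset block space (V, d), where V = F_q^{k_1} × ... × F_q^{k_n} and d(u,v) = max{ i : u_i ≠ v_i }, has order (q^{k_1}!)^{q^{N-k_1}} · (q^{k_2}!)^{q^{N-k_1-k_2}} · ... · (q^{k_{n-1}}!)^{q} · (q^{k_n}!), where N = k_1 + ... + k_n. -/

import Mathlib

/-- The chain poset block metric: `d(u,v) = max{ i : u_i ≠ v_i }` (1-indexed), `0` if `u = v`. -/
def chainDist {F : Type*} [DecidableEq F] {n : ℕ} {k : Fin n → ℕ}
    (u v : ∀ i : Fin n, Fin (k i) → F) : ℕ :=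
  (Finset.univ.filter fun i => u i ≠ v i).sup fun i => (i : ℕ) + 1

section Aux

variable {F : Type*} [Field F] [Fintype F] [DecidableEq F] {n : ℕ} {k : Fin n → ℕ}

lemma chainDist_le_iff {u v : ∀ i : Fin n, Fin (k i) → F} {m : ℕ} :
    chainDist u v ≤ m ↔ ∀ i : Fin n, m ≤ (i : ℕ) → u i = v i := by
  simp only [chainDist, Finset.sup_le_iff, Finset.mem_filter, Finset.mem_univ, true_and]
  constructor
  · intro h i hi
    by_contra hne
    have := h i hne
    omega
  · intro h i hne
    by_contra hm
    exact hne (h i (by omega))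

/-- The part of `u` strictly above coordinate `i`. -/
def upPart (i : Fin n) (u : ∀ j : Fin n, Fin (k j) → F) :
    ∀ j : {j : Fin n // i < j}, Fin (k j.1) → F := fun j => u j.1

/-- Extend an "upper part" `t` and a value `x` at `i` to a full vector (zero below `i`). -/
def extPart (i : Fin n) (t : ∀ j : {j : Fin n // i < j}, Fin (k j.1) → F)
    (x : Fin (k i) → F) (j : Fin n) : Fin (k j) → F :=
  if h : i < j then t ⟨j, h⟩ else if h2 : j = i then cast (by rw [h2]) x else 0

lemma extPart_self (i : Fin n) (t : ∀ j : {j : Fin n // i < j}, Fin (k j.1) → F)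
    (x : Fin (k i) → F) : extPart i t x i = x := by
  unfold extPart
  rw [dif_neg (lt_irrefl i), dif_pos rfl]
  exact cast_eq _ x

lemma upPart_extPart (i : Fin n) (t : ∀ j : {j : Fin n // i < j}, Fin (k j.1) → F)
    (x : Fin (k i) → F) : upPart i (extPart i t x) = t := by
  funext j
  exact dif_pos j.2

/-- The type of triangular families of permutations. -/
abbrev Fam (F : Type*) [Field F] [Fintype F] [DecidableEq F] (n : ℕ) (k : Fin n → ℕ) : Type _ :=
  ∀ i : Fin n, (∀ j : {j : Fin n // i < j}, Fin (k j.1) → F) → Equiv.Perm (Fin (k i) → F)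

def applyFam (f : Fam F n k) (u : ∀ j : Fin n, Fin (k j) → F) :
    ∀ j : Fin n, Fin (k j) → F := fun i => f i (upPart i u) (u i)

lemma applyFam_back (f : Fam F n k) {u v : ∀ j : Fin n, Fin (k j) → F} {m : ℕ}
    (h : ∀ j : Fin n, m ≤ (j : ℕ) → applyFam f u j = applyFam f v j) :
    ∀ j : Fin n, m ≤ (j : ℕ) → u j = v j := by
  suffices H : ∀ d : ℕ, ∀ j : Fin n, n - (j : ℕ) ≤ d → m ≤ (j : ℕ) → u j = v j by
    intro j hj
    exact H n j (by omega) hj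
  intro d
  induction d with
  | zero =>
    intro j hd hm
    have := j.isLt
    omega
  | succ d ih =>
    intro j hd hm
    have hup : upPart j u = upPart j v := by
      funext j'
      have hlt : (j : ℕ) < (j'.1 : ℕ) := j'.2
      have hjlt := j'.1.isLt
      exact ih j'.1 (by omega) (by omega)
    have key := h j hm
    simp only [applyFam, hup] at key
    exact (f j (upPart j v)).injective key

lemma applyFam_fwd (f : Fam F n k) {u v : ∀ j : Fin n, Fin (k j) → F} {m : ℕ}
    (h : ∀ j : Fin n, m ≤ (j : ℕ) → u j = v j) :
    ∀ j : Fin n, m ≤ (j : ℕ) → applyFam f u j = applyFam f v j := by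
  intro j hj
  have hup : upPart j u = upPart j v := by
    funext j'
    have hlt : (j : ℕ) < (j'.1 : ℕ) := j'.2
    exact h j'.1 (by omega)
  simp only [applyFam, hup, h j hj]

lemma applyFam_injective (f : Fam F n k) : Function.Injective (applyFam f) := by
  intro u v huv
  funext j
  exact applyFam_back f (fun j _ => congrFun huv j) j (Nat.zero_le _)

/-- The permutation induced by a triangular family. -/
noncomputable def permFam (f : Fam F n k) : Equiv.Perm (∀ j : Fin n, Fin (k j) → F) :=
  Equiv.ofBijective (applyFam f)
    ((Finite.injective_iff_bijective).mp (applyFam_injective f))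

lemma permFam_apply (f : Fam F n k) (u : ∀ j : Fin n, Fin (k j) → F) :
    permFam f u = applyFam f u := rfl

lemma permFam_pres (f : Fam F n k) (u v : ∀ j : Fin n, Fin (k j) → F) :
    chainDist (permFam f u) (permFam f v) = chainDist u v := by
  have key : ∀ m : ℕ, chainDist (applyFam f u) (applyFam f v) ≤ m ↔ chainDist u v ≤ m := by
    intro m
    rw [chainDist_le_iff, chainDist_le_iff]
    exact ⟨fun h => applyFam_back f h, fun h => applyFam_fwd f h⟩
  rw [permFam_apply, permFam_apply]
  exact le_antisymm ((key _).mpr le_rfl) ((key _).mp le_rfl)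

section FromIso

variable (T : Equiv.Perm (∀ j : Fin n, Fin (k j) → F))

lemma iso_agree (hT : ∀ u v, chainDist (T u) (T v) = chainDist u v) {m : ℕ} {u v : ∀ j : Fin n, Fin (k j) → F}
    (h : ∀ j : Fin n, m ≤ (j : ℕ) → u j = v j) :
    ∀ j : Fin n, m ≤ (j : ℕ) → T u j = T v j := by
  have : chainDist (T u) (T v) ≤ m := by
    rw [hT]
    exact chainDist_le_iff.mpr h
  exact chainDist_le_iff.mp this

lemma famOf_injective (hT : ∀ u v, chainDist (T u) (T v) = chainDist u v) (i : Fin n) (t : ∀ j : {j : Fin n // i < j}, Fin (k j.1) → F) :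
    Function.Injective (fun x : Fin (k i) → F => T (extPart i t x) i) := by
  intro x y hxy
  have hagree : ∀ j : Fin n, (i : ℕ) + 1 ≤ (j : ℕ) → extPart i t x j = extPart i t y j := by
    intro j hj
    have hij : i < j := by
      rw [Fin.lt_def]; omega
    simp only [extPart, dif_pos hij]
  have h1 : ∀ j : Fin n, (i : ℕ) ≤ (j : ℕ) → T (extPart i t x) j = T (extPart i t y) j := by
    intro j hj
    rcases eq_or_lt_of_le hj with heq | hlt
    · have : j = i := Fin.ext heq.symm
      subst this
      exact hxy
    · exact iso_agree T hT hagree j (by omega)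
  have h2 : chainDist (T (extPart i t x)) (T (extPart i t y)) ≤ (i : ℕ) :=
    chainDist_le_iff.mpr h1
  rw [hT] at h2
  have h3 := chainDist_le_iff.mp h2 i le_rfl
  rwa [extPart_self, extPart_self] at h3

/-- The triangular family extracted from an isometry. -/
noncomputable def famOf (hT : ∀ u v, chainDist (T u) (T v) = chainDist u v) : Fam F n k := fun i t =>
  Equiv.ofBijective (fun x => T (extPart i t x) i)
    ((Finite.injective_iff_bijective).mp (famOf_injective T hT i t))

lemma famOf_apply (hT : ∀ u v, chainDist (T u) (T v) = chainDist u v) (i : Fin n) (t : ∀ j : {j : Fin n // i < j}, Fin (k j.1) → F)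
    (x : Fin (k i) → F) : famOf T hT i t x = T (extPart i t x) i := rfl

lemma famOf_eq (hT : ∀ u v, chainDist (T u) (T v) = chainDist u v) (u : ∀ j : Fin n, Fin (k j) → F) (i : Fin n) :
    famOf T hT i (upPart i u) (u i) = T u i := by
  rw [famOf_apply]
  have hagree : ∀ j : Fin n, (i : ℕ) ≤ (j : ℕ) →
      extPart i (upPart i u) (u i) j = u j := by
    intro j hj
    rcases eq_or_lt_of_le hj with heq | hlt
    · have : j = i := Fin.ext heq.symm
      subst this
      exact extPart_self _ _ _
    · have hij : i < j := by rw [Fin.lt_def]; omega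
      simp only [extPart, dif_pos hij]
      rfl
  exact iso_agree T hT hagree i le_rfl

end FromIso

/-- The isometry group is in bijection with the triangular families. -/
noncomputable def isoEquiv :
    {T : Equiv.Perm (∀ i : Fin n, Fin (k i) → F) //
        ∀ u v, chainDist (T u) (T v) = chainDist u v} ≃ Fam F n k where
  toFun := fun T => famOf T.1 T.2
  invFun := fun f => ⟨permFam f, permFam_pres f⟩
  left_inv := fun T => by
    apply Subtype.ext
    apply Equiv.ext
    intro u
    funext i
    exact famOf_eq T.1 T.2 u i
  right_inv := fun f => by
    funext i t
    apply Equiv.ext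
    intro x
    rw [famOf_apply, permFam_apply]
    show f i (upPart i (extPart i t x)) ((extPart i t x) i) = f i t x
    rw [upPart_extPart, extPart_self]

end Aux

/-- The order of the symmetry group of the chain poset block space
`V = F_q^{k_1} × … × F_q^{k_n}` is
`(q^{k_1}!)^{q^{N-k_1}} ⋯ (q^{k_{n-1}}!)^{q^{k_n}} · (q^{k_n}!)`, i.e.
`∏_i (q^{k_i}!)^{q^{k_{i+1}+⋯+k_n}}`. -/
theorem stmt3 {F : Type*} [Field F] [Fintype F] [DecidableEq F] {n : ℕ} {k : Fin n → ℕ} :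
    Nat.card {T : Equiv.Perm (∀ i : Fin n, Fin (k i) → F) //
        ∀ u v, chainDist (T u) (T v) = chainDist u v} =
      ∏ i : Fin n, (Nat.factorial ((Fintype.card F) ^ (k i))) ^
        ((Fintype.card F) ^ (∑ j ∈ Finset.univ.filter fun j => i < j, k j)) := by
  rw [Nat.card_congr (isoEquiv (F := F) (n := n) (k := k))]
  rw [Nat.card_eq_fintype_card]
  rw [Fintype.card_pi]
  apply Finset.prod_congr rfl
  intro i _
  rw [Fintype.card_fun, Fintype.card_perm, Fintype.card_fun, Fintype.card_fin]
  congr 1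
  rw [Fintype.card_pi]
  have : ∀ j : {j : Fin n // i < j}, Fintype.card (Fin (k j.1) → F)
      = Fintype.card F ^ k j.1 := by
    intro j
    rw [Fintype.card_fun, Fintype.card_fin]
  rw [Finset.prod_congr rfl (fun j _ => this j), Finset.prod_pow_eq_pow_sum]
  congr 1
  exact (Finset.sum_subtype (p := fun j => i < j) (Finset.univ.filter fun j => i < j)
    (fun j => by simp) k).symm
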